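/- The mapping that sends each stable k-subset of [2n] (with [2n] identified with ±[n] via the cyclic order 1,−1,2,−2,…,n,−n) to the corresponding signed k-subset of [n] embeds the Schrijver graph S(2n,k) with all-negative signs as a subgraph of KS(n,k): any two disjoint stable k-subsets correspond to vertices joined by a negative edge. -/
import Mathlib


/-- A signed `k`-subset of `[n]`: a `k`-subset `A` of `{±1,…,±n}` with `A ∩ (−A) = ∅`. -/
def IsSignedKSubset (n k : ℕ) (A : Finset ℤ) : Prop :=
  A.card = k ∧ (∀ a ∈ A, a ≠ 0 ∧ a.natAbs ≤ n) ∧ ∀ a ∈ A, -a ∉ A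

/-- A set of nonzero integers is alternating if any two of its elements that are consecutive
in absolute value have opposite signs. -/
def IsAlternating (A : Finset ℤ) : Prop :=
  ∀ a ∈ A, ∀ b ∈ A, a.natAbs < b.natAbs →
    (∀ c ∈ A, ¬(a.natAbs < c.natAbs ∧ c.natAbs < b.natAbs)) → (0 < a ↔ b < 0)

/-- The element of smallest absolute value is positive. -/
def FirstPos (A : Finset ℤ) : Prop :=
  ∀ a ∈ A, (∀ b ∈ A, a.natAbs ≤ b.natAbs) → 0 < a

/-- Positive adjacency in the signed Kneser graph: `A ∩ (−B) = ∅`. -/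
def ksPos (A B : Finset ℤ) : Prop := ∀ a ∈ A, -a ∉ B

/-- Negative adjacency in the signed Kneser graph: `A ∩ B = ∅`. -/
def ksNeg (A B : Finset ℤ) : Prop := Disjoint A B

/-- The vertices of the signed Kneser graph `KS(n,k)`. -/
def KSVertex (n k : ℕ) : Type := {A : Finset ℤ // IsSignedKSubset n k A}

/-- The identification of `[2n]` (in the cyclic order `1,−1,2,−2,…,n,−n`) with `±[n]`:
position `2t+1` corresponds to `t+1` and position `2t+2` to `−(t+1)`. -/
def cyclicLabel (j : ℕ) : ℤ := if Odd j then ((j : ℤ) + 1) / 2 else -((j : ℤ) / 2)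

/-- A stable `k`-subset of the cyclically ordered set `[m]`: no two cyclically consecutive
elements. -/
def IsStableSubset (m k : ℕ) (S : Finset ℕ) : Prop :=
  S ⊆ Finset.Icc 1 m ∧ S.card = k ∧ ∀ j ∈ S, (j % m) + 1 ∉ S

/-- via the cyclic order `1,−1,2,−2,…,n,−n`, every stable `k`-subset of `[2n]`
yields a signed `k`-subset of `[n]`; the correspondence is injective, and disjoint stable
`k`-subsets are mapped to distinct vertices joined by a negative edge of `KS(n,k)`. Thus
`(S(2n,k),−)` is a subgraph of `KS(n,k)`. -/

lemma cyclicLabel_inj {j j' : ℕ} (hj : 1 ≤ j) (hj' : 1 ≤ j')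
    (h : cyclicLabel j = cyclicLabel j') : j = j' := by
  unfold cyclicLabel at h
  split_ifs at h with h1 h2 h2 <;>
    simp only [Nat.odd_iff, Nat.not_odd_iff] at * <;> omega

lemma cyclicLabel_spec {n j : ℕ} (hn : 1 ≤ j) (hj : j ≤ 2 * n) :
    cyclicLabel j ≠ 0 ∧ (cyclicLabel j).natAbs ≤ n := by
  unfold cyclicLabel
  split_ifs with h1 <;> simp only [Nat.odd_iff, Nat.not_odd_iff] at h1 <;>
    constructor <;> omega

theorem schrijver_negative_subgraph_of_signedKneser (n k : ℕ) (hk : 1 ≤ k) (hkn : k ≤ n) :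
    (∀ S : Finset ℕ, IsStableSubset (2 * n) k S →
        IsSignedKSubset n k (S.image cyclicLabel)) ∧
    (∀ S T : Finset ℕ, IsStableSubset (2 * n) k S → IsStableSubset (2 * n) k T →
        S ≠ T → S.image cyclicLabel ≠ T.image cyclicLabel) ∧
    (∀ S T : Finset ℕ, IsStableSubset (2 * n) k S → IsStableSubset (2 * n) k T →
        Disjoint S T →
        ksNeg (S.image cyclicLabel) (T.image cyclicLabel) ∧
          S.image cyclicLabel ≠ T.image cyclicLabel) := by

  have key : ∀ S : Finset ℕ, IsStableSubset (2 * n) k S →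
      IsSignedKSubset n k (S.image cyclicLabel) := by
    intro S ⟨hsub, hcard, hstab⟩
    have hmem : ∀ j ∈ S, 1 ≤ j ∧ j ≤ 2 * n := by
      intro j hj; exact Finset.mem_Icc.mp (hsub hj)
    refine ⟨?_, ?_, ?_⟩
    · rw [Finset.card_image_of_injOn, hcard]
      intro a ha b hb hab
      exact cyclicLabel_inj (hmem a ha).1 (hmem b hb).1 hab
    · intro a ha
      obtain ⟨j, hj, rfl⟩ := Finset.mem_image.mp ha
      exact cyclicLabel_spec (hmem j hj).1 (hmem j hj).2
    · intro a ha hna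
      obtain ⟨j, hj, rfl⟩ := Finset.mem_image.mp ha
      obtain ⟨j', hj', hjj'⟩ := Finset.mem_image.mp hna
      have h1 := hmem j hj
      have h2 := hmem j' hj'
      -- show j' = j + 1 or j = j' + 1
      have hz := (cyclicLabel_spec h1.1 h1.2).1
      unfold cyclicLabel at hjj' hz
      split_ifs at hjj' hz with p1 p2 p2 <;>
        simp only [Nat.odd_iff, Nat.not_odd_iff] at p1 p2
      · omega
      · have : j = j' + 1 := by omega
        have hjlt : j' % (2 * n) = j' := Nat.mod_eq_of_lt (by omega)
        exact hstab j' hj' (by rw [hjlt, ← this]; exact hj)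
      · have : j' = j + 1 := by omega
        have hjlt : j % (2 * n) = j := Nat.mod_eq_of_lt (by omega)
        exact hstab j hj (by rw [hjlt, ← this]; exact hj')
      · omega
  refine ⟨key, ?_, ?_⟩
  · intro S T hS hT hne heq
    apply hne
    ext j
    constructor <;> intro hj
    · have h1 := Finset.mem_Icc.mp (hS.1 hj)
      have : cyclicLabel j ∈ T.image cyclicLabel := heq ▸ Finset.mem_image_of_mem _ hj
      obtain ⟨j', hj', hjj'⟩ := Finset.mem_image.mp this
      have h2 := Finset.mem_Icc.mp (hT.1 hj')
      rwa [cyclicLabel_inj h2.1 h1.1 hjj'] at hj'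
    · have h1 := Finset.mem_Icc.mp (hT.1 hj)
      have : cyclicLabel j ∈ S.image cyclicLabel := heq ▸ Finset.mem_image_of_mem _ hj
      obtain ⟨j', hj', hjj'⟩ := Finset.mem_image.mp this
      have h2 := Finset.mem_Icc.mp (hS.1 hj')
      rwa [cyclicLabel_inj h2.1 h1.1 hjj'] at hj'
  · intro S T hS hT hdisj
    have hdis : ksNeg (S.image cyclicLabel) (T.image cyclicLabel) := by
      rw [ksNeg, Finset.disjoint_left]
      intro a ha hb
      obtain ⟨j, hj, rfl⟩ := Finset.mem_image.mp ha
      obtain ⟨j', hj', hjj'⟩ := Finset.mem_image.mp hb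
      have h1 := Finset.mem_Icc.mp (hS.1 hj)
      have h2 := Finset.mem_Icc.mp (hT.1 hj')
      have := cyclicLabel_inj h2.1 h1.1 hjj'
      subst this
      exact Finset.disjoint_left.mp hdisj hj hj'
    refine ⟨hdis, ?_⟩
    intro heq
    have hne : (S.image cyclicLabel).Nonempty := by
      rw [Finset.image_nonempty, ← Finset.card_pos, hS.2.1]; omega
    obtain ⟨a, ha⟩ := hne
    exact Finset.disjoint_left.mp hdis ha (heq ▸ ha)
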